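/- Let M_n be the free metabelian group of rank n ≥ 2 with generating family X = (x_1, …, x_n) given by the images of a free basis. Then pw(M_n, X) ≤ 4n − 1. -/

import Mathlib

/-- The element of `G` represented by a word in the alphabet `X^{±1}`:
a letter `(i, true)` stands for `X i` and `(i, false)` for `(X i)⁻¹`. -/
def evalWord {G : Type*} {n : ℕ} [Group G] (X : Fin n → G) (w : List (Fin n × Bool)) : G :=
  (w.map fun l => if l.2 then X l.1 else (X l.1)⁻¹).prod

/-- `g` is a palindrome with respect to the generating family `X` if it is represented by
some word whose sequence of letters equals its reverse. -/
def IsPalindrome {G : Type*} {n : ℕ} [Group G] (X : Fin n → G) (g : G) : Prop :=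
  ∃ w : List (Fin n × Bool), w.reverse = w ∧ evalWord X w = g

/-- `g` is a product of `k` palindromes with respect to `X`. -/
def IsPalProd {G : Type*} {n : ℕ} [Group G] (X : Fin n → G) (k : ℕ) (g : G) : Prop :=
  ∃ f : Fin k → G, (∀ i, IsPalindrome X (f i)) ∧ (List.ofFn f).prod = g

/-- The palindromic length of `g` with respect to `X`, valued in `ℕ∞`. -/
noncomputable def palLength {G : Type*} {n : ℕ} [Group G] (X : Fin n → G) (g : G) : ℕ∞ :=
  sInf {k : ℕ∞ | ∃ m : ℕ, k = (m : ℕ∞) ∧ IsPalProd X m g}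

/-- The palindromic width of `G` with respect to `X`, valued in `ℕ∞`. -/
noncomputable def palWidth {G : Type*} {n : ℕ} [Group G] (X : Fin n → G) : ℕ∞ :=
  ⨆ g : G, palLength X g

instance (n k : ℕ) : (derivedSeries (FreeGroup (Fin n)) k).Normal :=
  derivedSeries_normal _ _

/-- The free metabelian group `M_n` of rank `n`: the quotient of the free group on `n`
generators by its second derived subgroup. -/
abbrev FreeMetabelian (n : ℕ) :=
  FreeGroup (Fin n) ⧸ derivedSeries (FreeGroup (Fin n)) 2

/-- The images `x_1, …, x_n` of the free basis in `M_n`. -/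
def mGen (n : ℕ) (i : Fin n) : FreeMetabelian n :=
  QuotientGroup.mk (FreeGroup.of i)


/- ### Auxiliary development ### -/

open scoped commutatorElement

section Words

variable {G : Type*} {n : ℕ} [Group G] (X : Fin n → G)

theorem evalWord_nil : evalWord X [] = 1 := rfl

theorem evalWord_append (w₁ w₂ : List (Fin n × Bool)) :
    evalWord X (w₁ ++ w₂) = evalWord X w₁ * evalWord X w₂ := by
  simp [evalWord]

theorem evalWord_cons (l : Fin n × Bool) (w : List (Fin n × Bool)) :
    evalWord X (l :: w) = evalWord X [l] * evalWord X w := by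
  simp [evalWord]

/-- letterwise inversion -/
def flipL (l : Fin n × Bool) : Fin n × Bool := (l.1, !l.2)

theorem flipL_flipL (l : Fin n × Bool) : flipL (flipL l) = l := by
  cases l with | mk i b => cases b <;> rfl

theorem evalWord_single_flip (l : Fin n × Bool) :
    evalWord X [flipL l] = (evalWord X [l])⁻¹ := by
  cases l with | mk i b => cases b <;> simp [evalWord, flipL]

theorem evalWord_reverse_map_flip (w : List (Fin n × Bool)) :
    evalWord X (w.reverse.map flipL) = (evalWord X w)⁻¹ := by
  induction w with
  | nil => simp [evalWord]
  | cons l t ih =>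
    have h1 : ((l :: t).reverse.map flipL) = (t.reverse.map flipL) ++ [flipL l] := by simp
    rw [h1, evalWord_append, ih, evalWord_single_flip X l, evalWord_cons X l t, mul_inv_rev]

theorem evalWord_reverse_flip (w : List (Fin n × Bool)) :
    evalWord X ((w.map flipL).reverse) = (evalWord X w)⁻¹ := by
  rw [← List.map_reverse, evalWord_reverse_map_flip]

/-- word for a power of a generator -/
def zword (i : Fin n) (m : ℤ) : List (Fin n × Bool) :=
  if 0 ≤ m then List.replicate m.toNat (i, true) else List.replicate (-m).toNat (i, false)

theorem zword_reverse (i : Fin n) (m : ℤ) : (zword i m).reverse = zword i m := by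
  unfold zword; split <;> simp

theorem evalWord_zword (i : Fin n) (m : ℤ) : evalWord X (zword i m) = X i ^ m := by
  unfold zword
  split
  · rename_i h
    simp only [evalWord, List.map_replicate, if_pos, List.prod_replicate]
    rw [← zpow_natCast, Int.toNat_of_nonneg h]
  · rename_i h
    simp only [evalWord, List.map_replicate, List.prod_replicate, Bool.false_eq_true, if_false]
    rw [inv_pow, ← zpow_natCast, Int.toNat_of_nonneg (by omega), ← zpow_neg, neg_neg]

theorem isPal_one : IsPalindrome X 1 := ⟨[], rfl, rfl⟩

/-- the three palindromes multiplying to `⁅a, X i⁆ * X i ^ k`. -/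
theorem comm_pow_decomp {a : G} (w : List (Fin n × Bool)) (hw : evalWord X w = a)
    (i : Fin n) (k : ℤ) :
    ∃ p₁ p₂ p₃ : G, IsPalindrome X p₁ ∧ IsPalindrome X p₂ ∧ IsPalindrome X p₃ ∧
      p₁ * p₂ * p₃ = ⁅a, X i⁆ * X i ^ k := by
  refine ⟨evalWord X (w ++ [(i, true)] ++ w.reverse),
      evalWord X (w.map flipL ++ (w.map flipL).reverse),
      evalWord X (zword i (k - 1)), ⟨_, ?_, rfl⟩, ⟨_, ?_, rfl⟩, ⟨_, zword_reverse i _, rfl⟩, ?_⟩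
  · simp
  · simp
  · rw [evalWord_append, evalWord_append, evalWord_append, evalWord_reverse_flip,
      evalWord_zword, hw]
    have hrd : evalWord X w.reverse * evalWord X (w.map flipL) = 1 := by
      have h1 : evalWord X ((w.map flipL).reverse.map flipL) = (evalWord X (w.map flipL))⁻¹ :=
        evalWord_reverse_map_flip X (w.map flipL)
      have h2 : (w.map flipL).reverse.map flipL = w.reverse := by
        rw [← List.map_reverse, List.map_map]
        simp [Function.comp_def, flipL_flipL]
      rw [h2] at h1
      rw [h1, inv_mul_cancel]
    have h3 : evalWord X [(i, true)] = X i := by simp [evalWord]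
    rw [h3, commutatorElement_def]
    calc a * X i * evalWord X w.reverse * (evalWord X (w.map flipL) * a⁻¹) * X i ^ (k - 1)
        = a * X i * (evalWord X w.reverse * evalWord X (w.map flipL)) * a⁻¹ * X i ^ (k - 1) := by
          group
      _ = a * X i * a⁻¹ * X i ^ (k - 1) := by rw [hrd]; group
      _ = a * X i * a⁻¹ * (X i)⁻¹ * X i ^ k := by group


theorem conj_list_prod {G : Type*} [Group G] (g : G) (l : List G) :
    (l.map fun x => g * x * g⁻¹).prod = g * l.prod * g⁻¹ := by
  induction l with
  | nil => simp
  | cons x t ih => simp only [List.map_cons, List.prod_cons, ih]; group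

theorem bridge {G : Type*} [Group G] :
    ∀ (m : ℕ) (v : Fin m → G), ∃ w : Fin m → G, ∀ u : Fin m → G,
      (List.ofFn fun i => u i * v i).prod
        = (List.ofFn fun i => w i * u i * (w i)⁻¹).prod * (List.ofFn v).prod := by
  intro m
  induction m with
  | zero => exact fun v => ⟨fun i => 1, fun u => by simp⟩
  | succ m ih =>
    intro v
    obtain ⟨w', hw'⟩ := ih fun i => v i.succ
    refine ⟨(Fin.cons 1 fun j => v 0 * w' j : Fin (m+1) → G), fun u => ?_⟩
    simp only [List.ofFn_succ, Fin.cons_zero, Fin.cons_succ, List.prod_cons]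
    rw [hw' fun i => u i.succ]
    have hconj : (List.ofFn fun i => v 0 * w' i * u i.succ * (v 0 * w' i)⁻¹).prod
        = v 0 * (List.ofFn fun i => w' i * u i.succ * (w' i)⁻¹).prod * (v 0)⁻¹ := by
      rw [← conj_list_prod (v 0) (List.ofFn fun i => w' i * u i.succ * (w' i)⁻¹), List.map_ofFn]
      apply congrArg List.prod; apply congrArg List.ofFn; funext i; simp only [Function.comp_apply]; group
    rw [hconj]
    group

section Meta

variable {n : ℕ}

/-- abbreviation for the derived subgroup of the free metabelian group -/
def AA (n : ℕ) : Subgroup (FreeMetabelian n) := derivedSeries (FreeMetabelian n) 1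

instance : (AA n).Normal := derivedSeries_normal _ _

theorem closure_X : Subgroup.closure (Set.range (mGen n)) = ⊤ := by
  have h1 : Set.range (mGen n)
      = (QuotientGroup.mk' (derivedSeries (FreeGroup (Fin n)) 2)) '' Set.range FreeGroup.of := by
    rw [← Set.range_comp]; rfl
  rw [h1, ← MonoidHom.map_closure, FreeGroup.closure_range_of]
  exact Subgroup.map_top_of_surjective _ (QuotientGroup.mk'_surjective _)

theorem derived_two_bot : derivedSeries (FreeMetabelian n) 2 = ⊥ := by
  rw [← map_derivedSeries_eq (QuotientGroup.mk'_surjective (derivedSeries (FreeGroup (Fin n)) 2)) 2]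
  rw [eq_bot_iff]
  rintro g hg
  rw [Subgroup.mem_map] at hg
  obtain ⟨x, hx, rfl⟩ := hg
  exact (QuotientGroup.eq_one_iff x).mpr hx

theorem Acomm {a b : FreeMetabelian n} (ha : a ∈ AA n) (hb : b ∈ AA n) : a * b = b * a := by
  have h : ⁅a, b⁆ ∈ derivedSeries (FreeMetabelian n) 2 :=
    Subgroup.commutator_mem_commutator ha hb
  rw [derived_two_bot, Subgroup.mem_bot] at h
  exact (commutatorElement_eq_one_iff_commute.mp h).eq

theorem memA (u v : FreeMetabelian n) : ⁅u, v⁆ ∈ AA n := by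
  have : (AA n) = ⁅(⊤ : Subgroup (FreeMetabelian n)), ⊤⁆ := by
    rw [AA, derivedSeries_one, commutator_def]
  rw [this]
  exact Subgroup.commutator_mem_commutator (Subgroup.mem_top u) (Subgroup.mem_top v)

theorem conjA {a : FreeMetabelian n} (ha : a ∈ AA n) (g : FreeMetabelian n) :
    g * a * g⁻¹ ∈ AA n := by
  simpa [mul_assoc] using (inferInstance : (AA n).Normal).conj_mem a ha g

theorem conj_eq_of_comm {G : Type*} [Group G] {a b : G} (h : a * b = b * a) :
    a * b * a⁻¹ = b := by
  rw [h]; group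

/- list helpers -/
theorem prod_ofFn_mem {G : Type*} [Group G] {S : Subgroup G} {m : ℕ} {F : Fin m → G}
    (h : ∀ i, F i ∈ S) : (List.ofFn F).prod ∈ S := by
  apply Subgroup.list_prod_mem
  intro x hx
  rw [List.mem_ofFn] at hx
  obtain ⟨i, rfl⟩ := hx
  exact h i

theorem H1 {G : Type*} [Group G] {S : Subgroup G}
    (hS : ∀ a b : G, a ∈ S → b ∈ S → a * b = b * a)
    {m : ℕ} (F Gf : Fin m → G) (hF : ∀ i, F i ∈ S)
    (hG : ∀ i, Gf i ∈ S) :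
    (List.ofFn F).prod * (List.ofFn Gf).prod = (List.ofFn fun i => F i * Gf i).prod := by
  induction m with
  | zero => simp
  | succ m ih =>
    simp only [List.ofFn_succ, List.prod_cons]
    have hc : (List.ofFn fun i => F i.succ).prod * Gf 0
        = Gf 0 * (List.ofFn fun i => F i.succ).prod :=
      hS _ _ (prod_ofFn_mem fun i => hF i.succ) (hG 0)
    calc F 0 * (List.ofFn fun i => F i.succ).prod * (Gf 0 * (List.ofFn fun i => Gf i.succ).prod)
        = F 0 * ((List.ofFn fun i => F i.succ).prod * Gf 0)
            * (List.ofFn fun i => Gf i.succ).prod := by group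
      _ = F 0 * (Gf 0 * (List.ofFn fun i => F i.succ).prod)
            * (List.ofFn fun i => Gf i.succ).prod := by rw [hc]
      _ = F 0 * Gf 0 * ((List.ofFn fun i => F i.succ).prod
            * (List.ofFn fun i => Gf i.succ).prod) := by group
      _ = F 0 * Gf 0 * (List.ofFn fun i => F i.succ * Gf i.succ).prod := by
            rw [ih (fun i => F i.succ) (fun i => Gf i.succ)
              (fun i => hF i.succ) (fun i => hG i.succ)]

theorem H2 {G : Type*} [Group G] {S : Subgroup G}
    (hS : ∀ a b : G, a ∈ S → b ∈ S → a * b = b * a)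
    {m : ℕ} (F : Fin m → G) (hF : ∀ i, F i ∈ S) :
    ((List.ofFn F).prod)⁻¹ = (List.ofFn fun i => (F i)⁻¹).prod := by
  induction m with
  | zero => simp
  | succ m ih =>
    simp only [List.ofFn_succ, List.prod_cons, mul_inv_rev]
    rw [ih (fun i => F i.succ) (fun i => hF i.succ)]
    exact hS _ _ (prod_ofFn_mem fun i => inv_mem (hF i.succ)) (inv_mem (hF 0))

theorem H3 {G : Type*} [Group G] {m : ℕ} (F : Fin m → G) (j : Fin m)
    (h : ∀ k, k ≠ j → F k = 1) : (List.ofFn F).prod = F j := by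
  induction m with
  | zero => exact j.elim0
  | succ m ih =>
    simp only [List.ofFn_succ, List.prod_cons]
    rcases Fin.eq_zero_or_eq_succ j with hj | ⟨j', rfl⟩
    · subst hj
      have : (List.ofFn fun i => F i.succ).prod = 1 := by
        apply List.prod_eq_one
        intro x hx
        rw [List.mem_ofFn] at hx
        obtain ⟨i, rfl⟩ := hx
        exact h i.succ (Fin.succ_ne_zero i)
      rw [this, mul_one]
    · have h0 : F 0 = 1 := h 0 (Ne.symm (Fin.succ_ne_zero j'))
      rw [h0, one_mul]
      exact ih (fun i => F i.succ) j' fun k hk => h k.succ (by simpa using hk)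

end Meta

section Meta2

variable {n : ℕ}

theorem I1 {G : Type*} [Group G] (a b c : G) : ⁅a * b, c⁆ = a * ⁅b, c⁆ * a⁻¹ * ⁅a, c⁆ := by
  simp only [commutatorElement_def]; group

theorem I2 {G : Type*} [Group G] (a b c : G) : ⁅a, b * c⁆ = ⁅a, b⁆ * (b * ⁅a, c⁆ * b⁻¹) := by
  simp only [commutatorElement_def]; group

/-- for `a ∈ A`: `⁅a*y, x⁆ = ⁅a,x⁆ * ⁅y,x⁆`. -/
theorem F4 {a : FreeMetabelian n} (ha : a ∈ AA n) (y x : FreeMetabelian n) :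
    ⁅a * y, x⁆ = ⁅a, x⁆ * ⁅y, x⁆ := by
  rw [I1]
  rw [conj_eq_of_comm (Acomm ha (memA y x))]
  exact Acomm (memA y x) (memA a x)

theorem F5 {a : FreeMetabelian n} (ha : a ∈ AA n) (x : FreeMetabelian n) :
    ⁅a, x⁆⁻¹ = ⁅a⁻¹, x⁆ := by
  have h := F4 (inv_mem ha) a x
  rw [inv_mul_cancel] at h
  have h1 : ⁅(1 : FreeMetabelian n), x⁆ = 1 := commutatorElement_one_left x
  rw [h1] at h
  exact inv_eq_of_mul_eq_one_left h.symm

/-- conjugation of a commutator with `A`-entry. -/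
theorem F3 {a : FreeMetabelian n} (ha : a ∈ AA n) (g x : FreeMetabelian n) :
    g * ⁅a, x⁆ * g⁻¹ = ⁅g * a * g⁻¹, x⁆ := by
  rw [conjugate_commutatorElement]
  have hgx : g * x * g⁻¹ = ⁅g, x⁆ * x := by simp only [commutatorElement_def]; group
  rw [hgx, I2]
  have h1 : ⁅g * a * g⁻¹, ⁅g, x⁆⁆ = 1 :=
    commutatorElement_eq_one_iff_commute.mpr (Acomm (conjA ha g) (memA g x))
  rw [h1, one_mul]
  exact conj_eq_of_comm (Acomm (memA g x) (memA (g * a * g⁻¹) x))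

/-- the subgroup `B` (corresponding to the augmentation ideal times `A`). -/
def BB (n : ℕ) : Subgroup (FreeMetabelian n) :=
  Subgroup.closure {g | ∃ c ∈ AA n, ∃ i, g = ⁅c, mGen n i⁆}

theorem B_le_A : BB n ≤ AA n := by
  rw [BB, Subgroup.closure_le]
  rintro g ⟨c, hc, i, rfl⟩
  exact memA c (mGen n i)

theorem B_conj {b : FreeMetabelian n} (hb : b ∈ BB n) (g : FreeMetabelian n) :
    g * b * g⁻¹ ∈ BB n := by
  induction hb using Subgroup.closure_induction with
  | mem x hx =>
    obtain ⟨c, hc, i, rfl⟩ := hx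
    rw [F3 hc]
    exact Subgroup.subset_closure ⟨g * c * g⁻¹, conjA hc g, i, rfl⟩
  | one => simpa using one_mem (BB n)
  | mul x y hx hy px py =>
    have : g * (x * y) * g⁻¹ = (g * x * g⁻¹) * (g * y * g⁻¹) := by group
    rw [this]; exact mul_mem px py
  | inv x hx px =>
    have : g * x⁻¹ * g⁻¹ = (g * x * g⁻¹)⁻¹ := by group
    rw [this]; exact inv_mem px

/-- conjugation acts trivially on `A` modulo `B`. -/
theorem conj_defect (m : FreeMetabelian n) {c : FreeMetabelian n} (hc : c ∈ AA n) :
    m * c * m⁻¹ * c⁻¹ ∈ BB n := by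
  have hm : m ∈ Subgroup.closure (Set.range (mGen n)) := by
    rw [closure_X]; trivial
  induction hm using Subgroup.closure_induction generalizing c with
  | mem x hx =>
    obtain ⟨i, rfl⟩ := hx
    have : mGen n i * c * (mGen n i)⁻¹ * c⁻¹ = ⁅c, mGen n i⁆⁻¹ := by
      rw [commutatorElement_inv, commutatorElement_def]
    rw [this]
    exact inv_mem (Subgroup.subset_closure ⟨c, hc, i, rfl⟩)
  | one => simpa using one_mem (BB n)
  | mul x y hx hy px py =>
    have key : (x * y) * c * (x * y)⁻¹ * c⁻¹
        = (x * (y * c * y⁻¹) * x⁻¹ * (y * c * y⁻¹)⁻¹) * (y * c * y⁻¹ * c⁻¹) := by group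
    rw [key]
    exact mul_mem (px (conjA hc y)) (py hc)
  | inv x hx px =>
    have key : x⁻¹ * c * x * c⁻¹ = (x * (x⁻¹ * c * x) * x⁻¹ * (x⁻¹ * c * x)⁻¹)⁻¹ := by group
    have : x⁻¹ * c * x⁻¹⁻¹ * c⁻¹ = x⁻¹ * c * x * c⁻¹ := by group
    rw [this, key]
    exact inv_mem (px (by simpa [mul_assoc] using conjA hc x⁻¹))

/-- decomposition of elements of `B`. -/
theorem LB {b : FreeMetabelian n} (hb : b ∈ BB n) :
    ∃ e : Fin n → FreeMetabelian n, (∀ i, e i ∈ AA n) ∧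
      b = (List.ofFn fun i => ⁅e i, mGen n i⁆).prod := by
  induction hb using Subgroup.closure_induction with
  | mem x hx =>
    obtain ⟨c, hc, j, rfl⟩ := hx
    refine ⟨fun k => if k = j then c else 1, ?_, ?_⟩
    · intro k
      by_cases hk : k = j
      · simp only [hk, if_pos]; exact hc
      · simp only [if_neg hk]; exact one_mem _
    · rw [H3 _ j fun k hk => by simp [if_neg hk]]
      simp
  | one =>
    refine ⟨fun _ => 1, fun _ => one_mem _, ?_⟩
    symm
    apply List.prod_eq_one
    intro x hx
    rw [List.mem_ofFn] at hx
    obtain ⟨i, rfl⟩ := hx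
    exact commutatorElement_one_left _
  | mul x y hx hy px py =>
    obtain ⟨e, he, rfl⟩ := px
    obtain ⟨f, hf, rfl⟩ := py
    refine ⟨fun i => e i * f i, fun i => mul_mem (he i) (hf i), ?_⟩
    rw [H1 (fun _ _ => Acomm) _ _ (fun i => memA _ _) (fun i => memA _ _)]
    apply congrArg List.prod; apply congrArg List.ofFn; funext i
    exact (F4 (he i) (f i) (mGen n i)).symm
  | inv x hx px =>
    obtain ⟨e, he, rfl⟩ := px
    refine ⟨fun i => (e i)⁻¹, fun i => inv_mem (he i), ?_⟩
    rw [H2 (fun _ _ => Acomm) _ fun i => memA _ _]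
    apply congrArg List.prod; apply congrArg List.ofFn; funext i
    exact F5 (he i) (mGen n i)

end Meta2

section Meta3

variable {n : ℕ}

instance : (BB n).Normal := ⟨fun b hb g => by simpa [mul_assoc] using B_conj hb g⟩

/-- projection to the quotient modulo `B`. -/
def πB (n : ℕ) : FreeMetabelian n →* FreeMetabelian n ⧸ BB n := QuotientGroup.mk' (BB n)

theorem central {c : FreeMetabelian n} (hc : c ∈ AA n) (q : FreeMetabelian n ⧸ BB n) :
    Commute (πB n c) q := by
  obtain ⟨m, rfl⟩ := QuotientGroup.mk'_surjective (BB n) q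
  have h : πB n ⁅m, c⁆ = 1 := (QuotientGroup.eq_one_iff _).mpr (by
    rw [commutatorElement_def]; exact conj_defect m hc)
  rw [map_commutatorElement] at h
  exact (commutatorElement_eq_one_iff_commute.mp h).symm

theorem comm_mem_center (a x : FreeMetabelian n) :
    πB n ⁅a, x⁆ ∈ Subgroup.center (FreeMetabelian n ⧸ BB n) :=
  Subgroup.mem_center_iff.mpr fun q => (central (memA a x) q).symm.eq

theorem center_comm {G : Type*} [Group G] :
    ∀ a b : G, a ∈ Subgroup.center G → b ∈ Subgroup.center G → a * b = b * a :=
  fun a b ha _ => (Subgroup.mem_center_iff.mp ha b).symm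

/-- bilinearity of commutators in the quotient: left argument. -/
theorem QF4 (a a' x : FreeMetabelian n) :
    πB n ⁅a * a', x⁆ = πB n ⁅a, x⁆ * πB n ⁅a', x⁆ := by
  rw [I1 a a' x]
  rw [map_mul, map_mul, map_mul, map_inv]
  rw [conj_eq_of_comm ((central (memA a' x) (πB n a)).symm.eq)]
  exact (central (memA a' x) (πB n ⁅a, x⁆)).eq

/-- bilinearity of commutators in the quotient: right argument. -/
theorem QF4r (a x x' : FreeMetabelian n) :
    πB n ⁅a, x * x'⁆ = πB n ⁅a, x⁆ * πB n ⁅a, x'⁆ := by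
  rw [I2 a x x']
  rw [map_mul, map_mul, map_mul, map_inv]
  rw [conj_eq_of_comm ((central (memA a x') (πB n x)).symm.eq)]

theorem QF5 (a x : FreeMetabelian n) : πB n ⁅a⁻¹, x⁆ = (πB n ⁅a, x⁆)⁻¹ := by
  have h := QF4 a⁻¹ a x
  rw [inv_mul_cancel, commutatorElement_one_left, map_one] at h
  exact (inv_eq_of_mul_eq_one_left h.symm).symm

theorem QF5r (a x : FreeMetabelian n) : πB n ⁅a, x⁻¹⁆ = (πB n ⁅a, x⁆)⁻¹ := by
  have h := QF4r a x⁻¹ x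
  rw [inv_mul_cancel, commutatorElement_one_right, map_one] at h
  exact (inv_eq_of_mul_eq_one_left h.symm).symm

/-- products of one-per-generator commutators in the quotient. -/
def PDQ (g : FreeMetabelian n) : Prop :=
  ∃ a : Fin n → FreeMetabelian n,
    πB n g = (List.ofFn fun i => πB n ⁅a i, mGen n i⁆).prod

theorem PDQ_one : PDQ (1 : FreeMetabelian n) := by
  refine ⟨fun _ => 1, ?_⟩
  rw [map_one]
  symm
  apply List.prod_eq_one
  intro x hx
  rw [List.mem_ofFn] at hx
  obtain ⟨i, rfl⟩ := hx
  simp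

theorem PDQ_mul {g h : FreeMetabelian n} (hg : PDQ g) (hh : PDQ h) : PDQ (g * h) := by
  obtain ⟨a, ha⟩ := hg
  obtain ⟨a', ha'⟩ := hh
  refine ⟨fun i => a i * a' i, ?_⟩
  rw [map_mul, ha, ha',
    H1 center_comm _ _ (fun i => comm_mem_center _ _) (fun i => comm_mem_center _ _)]
  apply congrArg List.prod; apply congrArg List.ofFn; funext i
  exact (QF4 (a i) (a' i) (mGen n i)).symm

theorem PDQ_inv {g : FreeMetabelian n} (hg : PDQ g) : PDQ g⁻¹ := by
  obtain ⟨a, ha⟩ := hg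
  refine ⟨fun i => (a i)⁻¹, ?_⟩
  rw [map_inv, ha, H2 center_comm _ (fun i => comm_mem_center _ _)]
  apply congrArg List.prod; apply congrArg List.ofFn; funext i
  exact (QF5 (a i) (mGen n i)).symm

theorem PDQ_of_mem_B {b : FreeMetabelian n} (hb : b ∈ BB n) : PDQ b := by
  have h : πB n b = 1 := (QuotientGroup.eq_one_iff _).mpr hb
  refine ⟨fun _ => 1, ?_⟩
  rw [h]
  symm
  apply List.prod_eq_one
  intro x hx
  rw [List.mem_ofFn] at hx
  obtain ⟨i, rfl⟩ := hx
  simp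

theorem PDQ_base (i j : Fin n) : PDQ ⁅mGen n i, mGen n j⁆ := by
  refine ⟨fun k => if k = j then mGen n i else 1, ?_⟩
  rw [H3 _ j fun k hk => by simp [if_neg hk]]
  simp

theorem PDQ_congr {g h : FreeMetabelian n} (hgh : πB n g = πB n h) (hh : PDQ h) : PDQ g := by
  obtain ⟨a, ha⟩ := hh
  exact ⟨a, hgh.trans ha⟩

theorem PDQ_commutator_gen (i : Fin n) (v : FreeMetabelian n) : PDQ ⁅mGen n i, v⁆ := by
  have hv : v ∈ Subgroup.closure (Set.range (mGen n)) := by rw [closure_X]; trivial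
  induction hv using Subgroup.closure_induction with
  | mem x hx => obtain ⟨j, rfl⟩ := hx; exact PDQ_base i j
  | one => rw [commutatorElement_one_right]; exact PDQ_one
  | mul x y hx hy px py =>
    exact PDQ_congr (by rw [QF4r, map_mul]) (PDQ_mul px py)
  | inv x hx px =>
    exact PDQ_congr (by rw [QF5r, map_inv]) (PDQ_inv px)

theorem PDQ_commutator (u v : FreeMetabelian n) : PDQ ⁅u, v⁆ := by
  have hu : u ∈ Subgroup.closure (Set.range (mGen n)) := by rw [closure_X]; trivial
  induction hu using Subgroup.closure_induction with
  | mem x hx => obtain ⟨j, rfl⟩ := hx; exact PDQ_commutator_gen j v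
  | one => rw [commutatorElement_one_left]; exact PDQ_one
  | mul x y hx hy px py =>
    exact PDQ_congr (by rw [QF4, map_mul]) (PDQ_mul px py)
  | inv x hx px =>
    exact PDQ_congr (by rw [QF5, map_inv]) (PDQ_inv px)

theorem PDQ_A {c : FreeMetabelian n} (hc : c ∈ AA n) : PDQ c := by
  have hc' : c ∈ Subgroup.closure (commutatorSet (FreeMetabelian n)) := by
    rw [← commutator_eq_closure]
    rw [AA, derivedSeries_one] at hc
    exact hc
  clear hc
  induction hc' using Subgroup.closure_induction with
  | mem x hx => obtain ⟨u, v, rfl⟩ := hx; exact PDQ_commutator u v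
  | one => exact PDQ_one
  | mul x y hx hy px py => exact PDQ_mul px py
  | inv x hx px => exact PDQ_inv px

end Meta3

section Meta4

variable {n : ℕ}

theorem factor_memA (w : Fin n → FreeMetabelian n) (a : Fin n → FreeMetabelian n) (i : Fin n) :
    w i * ⁅a i, mGen n i⁆ * (w i)⁻¹ ∈ AA n :=
  conjA (memA _ _) _

theorem conj_comm_eq (w g x : FreeMetabelian n) :
    w * ⁅w⁻¹ * g * w, x⁆ * w⁻¹ = ⁅g, ⁅w, x⁆⁆ * ⁅g, x⁆ := by
  rw [conjugate_commutatorElement]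
  have h1 : w * (w⁻¹ * g * w) * w⁻¹ = g := by group
  have h2 : w * x * w⁻¹ = ⁅w, x⁆ * x := by rw [commutatorElement_def]; group
  rw [h1, h2, I2]
  rw [conj_eq_of_comm (Acomm (memA w x) (memA g x))]

theorem step1 (w g x : FreeMetabelian n) :
    ⁅g, x⁆ = ⁅g, ⁅w, x⁆⁆⁻¹ * (w * ⁅w⁻¹ * g * w, x⁆ * w⁻¹) := by
  rw [conj_comm_eq]; group

theorem err_mem_B (w g x : FreeMetabelian n) : ⁅g, ⁅w, x⁆⁆⁻¹ ∈ BB n := by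
  apply inv_mem
  rw [commutatorElement_def]
  exact conj_defect g (memA w x)

theorem step2 {e : FreeMetabelian n} (he : e ∈ AA n) (w a x : FreeMetabelian n) :
    ⁅e, x⁆ * (w * ⁅a, x⁆ * w⁻¹) = w * ⁅(w⁻¹ * e * w) * a, x⁆ * w⁻¹ := by
  have hew : w⁻¹ * e * w ∈ AA n := by
    have := conjA he w⁻¹; rwa [inv_inv] at this
  rw [F4 hew a x]
  have h3 : w * (⁅w⁻¹ * e * w, x⁆ * ⁅a, x⁆) * w⁻¹
      = (w * ⁅w⁻¹ * e * w, x⁆ * w⁻¹) * (w * ⁅a, x⁆ * w⁻¹) := by group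
  rw [mul_assoc w, h3, conj_comm_eq w e x]
  have h4 : ⁅e, ⁅w, x⁆⁆ = 1 :=
    commutatorElement_eq_one_iff_commute.mpr (Acomm he (memA w x))
  rw [h4, one_mul]
  group

/-- Key lemma: every element of the derived subgroup is an exact product of `n`
conjugated commutators, one per generator, with prescribed conjugators. -/
theorem LemmaL {c : FreeMetabelian n} (hc : c ∈ AA n) (w : Fin n → FreeMetabelian n) :
    ∃ a : Fin n → FreeMetabelian n,
      c = (List.ofFn fun i => w i * ⁅a i, mGen n i⁆ * (w i)⁻¹).prod := by
  obtain ⟨a₀, ha₀⟩ := PDQ_A hc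
  -- convert quotient equality to an exact equality with a B-error
  set P : FreeMetabelian n := (List.ofFn fun i => ⁅a₀ i, mGen n i⁆).prod with hP
  have hπP : πB n P = (List.ofFn fun i => πB n ⁅a₀ i, mGen n i⁆).prod := by
    rw [hP, map_list_prod, List.map_ofFn]
    rfl
  have hb₀ : c * P⁻¹ ∈ BB n := by
    apply (QuotientGroup.eq_one_iff _).mp
    show πB n (c * P⁻¹) = 1
    rw [map_mul, map_inv, hπP, ← ha₀, mul_inv_cancel]
  have hc' : c = (c * P⁻¹) * P := by group
  -- rewrite P with conjugators and collect errors
  have hPdecomp : P = (List.ofFn fun i => ⁅a₀ i, ⁅w i, mGen n i⁆⁆⁻¹).prod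
      * (List.ofFn fun i => w i * ⁅(w i)⁻¹ * a₀ i * w i, mGen n i⁆ * (w i)⁻¹).prod := by
    rw [H1 (fun _ _ => Acomm) (fun i => ⁅a₀ i, ⁅w i, mGen n i⁆⁆⁻¹)
      (fun i => w i * ⁅(w i)⁻¹ * a₀ i * w i, mGen n i⁆ * (w i)⁻¹)
      (fun i => inv_mem (memA _ _)) (fun i => factor_memA w (fun i => (w i)⁻¹ * a₀ i * w i) i)]
    rw [hP]
    apply congrArg List.prod; apply congrArg List.ofFn; funext i
    exact step1 (w i) (a₀ i) (mGen n i)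
  set E : FreeMetabelian n := (List.ofFn fun i => ⁅a₀ i, ⁅w i, mGen n i⁆⁆⁻¹).prod with hE
  have hEB : E ∈ BB n := by
    apply Subgroup.list_prod_mem
    intro x hx
    rw [List.mem_ofFn] at hx
    obtain ⟨i, rfl⟩ := hx
    exact err_mem_B (w i) (a₀ i) (mGen n i)
  have hb₁ : (c * P⁻¹) * E ∈ BB n := mul_mem hb₀ hEB
  obtain ⟨e, he, hedecomp⟩ := LB hb₁
  refine ⟨fun i => ((w i)⁻¹ * e i * w i) * ((w i)⁻¹ * a₀ i * w i), ?_⟩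
  calc c = ((c * P⁻¹) * E) * (E⁻¹ * P) := by group
    _ = ((c * P⁻¹) * E) * (List.ofFn fun i =>
          w i * ⁅(w i)⁻¹ * a₀ i * w i, mGen n i⁆ * (w i)⁻¹).prod := by
        rw [hPdecomp]; group
    _ = (List.ofFn fun i => ⁅e i, mGen n i⁆).prod * (List.ofFn fun i =>
          w i * ⁅(w i)⁻¹ * a₀ i * w i, mGen n i⁆ * (w i)⁻¹).prod := by rw [← hedecomp]
    _ = (List.ofFn fun i => ⁅e i, mGen n i⁆
          * (w i * ⁅(w i)⁻¹ * a₀ i * w i, mGen n i⁆ * (w i)⁻¹)).prod := by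
        rw [H1 (fun _ _ => Acomm) (fun i => ⁅e i, mGen n i⁆)
          (fun i => w i * ⁅(w i)⁻¹ * a₀ i * w i, mGen n i⁆ * (w i)⁻¹)
          (fun i => memA _ _) (fun i => factor_memA w (fun i => (w i)⁻¹ * a₀ i * w i) i)]
    _ = (List.ofFn fun i => w i * ⁅((w i)⁻¹ * e i * w i) * ((w i)⁻¹ * a₀ i * w i), mGen n i⁆
          * (w i)⁻¹).prod := by
        apply congrArg List.prod; apply congrArg List.ofFn; funext i
        exact step2 (he i) (w i) ((w i)⁻¹ * a₀ i * w i) (mGen n i)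

end Meta4

section Meta5

variable {n : ℕ}

/-- existence of exponents: every element agrees with a product of powers of the
generators modulo the derived subgroup. -/
theorem expA (g : FreeMetabelian n) :
    ∃ k : Fin n → ℤ, g * ((List.ofFn fun i => mGen n i ^ k i).prod)⁻¹ ∈ AA n := by
  have key : ∃ k : Fin n → ℤ, Abelianization.of g
      = ∏ i, (Abelianization.of (mGen n i)) ^ (k i) := by
    have hg : g ∈ Subgroup.closure (Set.range (mGen n)) := by rw [closure_X]; trivial
    induction hg using Subgroup.closure_induction with
    | mem x hx =>
      obtain ⟨j, rfl⟩ := hx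
      refine ⟨fun i => if i = j then 1 else 0, ?_⟩
      have hstep : ∀ i ∈ Finset.univ, (Abelianization.of (mGen n i)) ^ (if i = j then (1:ℤ) else 0)
          = if i = j then Abelianization.of (mGen n i) else 1 := by
        intro i _; split <;> simp
      rw [Finset.prod_congr rfl hstep, Finset.prod_ite_eq' Finset.univ j
        (fun i => Abelianization.of (mGen n i))]
      simp
    | one => exact ⟨fun _ => 0, by simp⟩
    | mul x y hx hy px py =>
      obtain ⟨k, hk⟩ := px
      obtain ⟨l, hl⟩ := py
      refine ⟨fun i => k i + l i, ?_⟩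
      rw [map_mul, hk, hl, ← Finset.prod_mul_distrib]
      exact Finset.prod_congr rfl fun i _ => (zpow_add _ _ _).symm
    | inv x hx px =>
      obtain ⟨k, hk⟩ := px
      refine ⟨fun i => -(k i), ?_⟩
      rw [map_inv, hk, ← Finset.prod_inv_distrib]
      exact Finset.prod_congr rfl fun i _ => (zpow_neg _ _).symm
  obtain ⟨k, hk⟩ := key
  refine ⟨k, ?_⟩
  have hV : Abelianization.of ((List.ofFn fun i => mGen n i ^ k i).prod)
      = ∏ i, (Abelianization.of (mGen n i)) ^ (k i) := by
    rw [map_list_prod, List.map_ofFn, ← List.prod_ofFn]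
    apply congrArg List.prod; apply congrArg List.ofFn; funext i
    simp [Function.comp, map_zpow]
  have h1 : Abelianization.of (g * ((List.ofFn fun i => mGen n i ^ k i).prod)⁻¹) = 1 := by
    rw [map_mul, map_inv, hk, hV, mul_inv_cancel]
  have h2 : g * ((List.ofFn fun i => mGen n i ^ k i).prod)⁻¹
      ∈ commutator (FreeMetabelian n) := (QuotientGroup.eq_one_iff _).mp h1
  rw [AA, derivedSeries_one]
  exact h2

/-- every element of the free metabelian group is represented by a word. -/
theorem exists_word (g : FreeMetabelian n) : ∃ w, evalWord (mGen n) w = g := by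
  have hg : g ∈ Subgroup.closure (Set.range (mGen n)) := by rw [closure_X]; trivial
  induction hg using Subgroup.closure_induction with
  | mem x hx =>
    obtain ⟨i, rfl⟩ := hx
    exact ⟨[(i, true)], by simp [evalWord]⟩
  | one => exact ⟨[], rfl⟩
  | mul x y hx hy px py =>
    obtain ⟨w₁, hw₁⟩ := px
    obtain ⟨w₂, hw₂⟩ := py
    exact ⟨w₁ ++ w₂, by rw [evalWord_append, hw₁, hw₂]⟩
  | inv x hx px =>
    obtain ⟨w₁, hw₁⟩ := px
    exact ⟨w₁.reverse.map flipL, by rw [evalWord_reverse_map_flip, hw₁]⟩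

end Meta5

theorem isPalProd_of_list {G : Type*} {m : ℕ} [Group G] (X : Fin m → G) {g : G}
    (L : List G) {k : ℕ} (h : L.length = k) (hp : ∀ p ∈ L, IsPalindrome X p)
    (hg : L.prod = g) : IsPalProd X k g := by
  subst h
  refine ⟨L.get, fun i => hp _ (L.get_mem i), ?_⟩
  rw [List.ofFn_get]
  exact hg

theorem main_decomp (n : ℕ) (hn : 2 ≤ n) (g : FreeMetabelian n) :
    IsPalProd (mGen n) (4 * n - 1) g := by
  obtain ⟨k, hk⟩ := expA g
  obtain ⟨w, hw⟩ := bridge n (fun i => mGen n i ^ k i)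
  obtain ⟨a, ha⟩ := LemmaL hk w
  have hg : (List.ofFn fun i => ⁅a i, mGen n i⁆ * mGen n i ^ k i).prod = g := by
    rw [hw (fun i => ⁅a i, mGen n i⁆), ← ha]
    group
  choose ws hws using fun i => exists_word (a i)
  choose p₁ p₂ p₃ h₁ h₂ h₃ hprod using fun i =>
    comm_pow_decomp (mGen n) (ws i) (hws i) i (k i)
  refine isPalProd_of_list (mGen n)
    ((List.ofFn fun i => [p₁ i, p₂ i, p₃ i]).flatten ++ List.replicate (n - 1) 1) ?_ ?_ ?_
  · rw [List.length_append, List.length_flatten, List.map_ofFn, List.length_replicate]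
    have : (List.ofFn ((fun l => l.length) ∘ fun i : Fin n => [p₁ i, p₂ i, p₃ i])).sum
        = (List.replicate n 3).sum := by
      apply congrArg; rw [← List.ofFn_const n 3]; rfl
    rw [this, List.sum_replicate, smul_eq_mul]
    omega
  · intro p hp
    rw [List.mem_append] at hp
    rcases hp with hp | hp
    · rw [List.mem_flatten] at hp
      obtain ⟨l, hl, hpl⟩ := hp
      rw [List.mem_ofFn] at hl
      obtain ⟨i, rfl⟩ := hl
      simp only [List.mem_cons, List.not_mem_nil, or_false] at hpl
      rcases hpl with rfl | rfl | rfl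
      exacts [h₁ i, h₂ i, h₃ i]
    · rw [List.eq_of_mem_replicate hp]
      exact isPal_one (mGen n)
  · rw [List.prod_append, List.prod_flatten, List.map_ofFn, List.prod_replicate, one_pow,
      mul_one]
    rw [← hg]
    apply congrArg List.prod; apply congrArg List.ofFn; funext i
    simp only [Function.comp_apply, List.prod_cons, List.prod_nil, mul_one]
    rw [← hprod i]
    group

/-- For `n ≥ 2`, the palindromic width of the free metabelian group of rank `n` is
at most `4n - 1`. -/
theorem pw_freeMetabelian_le (n : ℕ) (hn : 2 ≤ n) :
    palWidth (mGen n) ≤ ((4 * n - 1 : ℕ) : ℕ∞) := by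
  rw [palWidth]
  refine iSup_le fun g => ?_
  exact sInf_le ⟨4 * n - 1, rfl, main_decomp n hn g⟩
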